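/- Let 𝔸 be a complete normed ring (e.g. the Banach algebra of continuous linear endomorphisms of ℝⁿ) and let (ξᵢ)_{i∈ℕ} be a sequence of elements of 𝔸 such that Σᵢ ‖ξᵢ‖ < ∞. Then the sequence of partial products gₙ = exp(ξₙ) · exp(ξₙ₋₁) ⋯ exp(ξ₀) converges in 𝔸, and its limit g is invertible, with inverse the limit of hₙ = exp(−ξ₀) · exp(−ξ₁) ⋯ exp(−ξₙ). -/

import Mathlib

open Filter Topology

section Aux

variable {𝔸 : Type*} [NormedRing 𝔸] [NormedAlgebra ℝ 𝔸] [CompleteSpace 𝔸]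

set_option maxHeartbeats 1000000 in
lemma my_norm_exp_sub_one_le (x : 𝔸) :
    ‖NormedSpace.exp x - 1‖ ≤ Real.exp ‖x‖ - 1 := by
  have hs : Summable (fun n : ℕ => ((Nat.factorial n : ℝ))⁻¹ • x ^ n) :=
    NormedSpace.expSeries_summable' x
  have h1 : NormedSpace.exp x - 1 = ∑' n : ℕ, ((Nat.factorial (n+1) : ℝ))⁻¹ • x ^ (n+1) := by
    simp only [NormedSpace.exp_eq_tsum ℝ]
    rw [Summable.tsum_eq_zero_add hs]
    simp
  have hsr : Summable (fun n : ℕ => ‖x‖ ^ n / Nat.factorial n) :=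
    Real.summable_pow_div_factorial _
  have h2 : Real.exp ‖x‖ - 1 = ∑' n : ℕ, ‖x‖ ^ (n+1) / Nat.factorial (n+1) := by
    rw [Real.exp_eq_exp_ℝ]
    simp only [NormedSpace.exp_eq_tsum_div]
    rw [Summable.tsum_eq_zero_add hsr]
    simp
  rw [h1, h2]
  have hs1 : Summable (fun n : ℕ => ‖((Nat.factorial (n+1) : ℝ))⁻¹ • x ^ (n+1)‖) := by
    have := (NormedSpace.norm_expSeries_summable' (𝕂 := ℝ) x)
    exact ((summable_nat_add_iff 1).2 this)
  refine (norm_tsum_le_tsum_norm hs1).trans ?_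
  refine Summable.tsum_le_tsum (fun n => ?_) hs1 ((summable_nat_add_iff 1).2 hsr)
  rw [norm_smul, Real.norm_eq_abs, abs_inv, Nat.abs_cast, inv_mul_eq_div]
  have hfac : (0:ℝ) < (Nat.factorial (n+1) : ℝ) := by exact_mod_cast Nat.factorial_pos _
  exact div_le_div_of_nonneg_right (norm_pow_le' x (Nat.succ_pos n)) hfac.le

lemma my_exp_mul_exp_neg (x : 𝔸) :
    NormedSpace.exp x * NormedSpace.exp (-x) = 1 := by
  letI : NormedAlgebra ℚ 𝔸 := .restrictScalars ℚ ℝ 𝔸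
  rw [← NormedSpace.exp_add_of_commute (Commute.refl x).neg_right, add_neg_cancel,
    NormedSpace.exp_zero]

end Aux

set_option maxHeartbeats 1000000 in
/-- If `(ξᵢ)` is a sequence in a complete normed algebra with `Σ ‖ξᵢ‖ < ∞`, then the
partial products `gₙ = exp(ξₙ)⋯exp(ξ₀)` converge, the limit `g` is invertible, and its
inverse is the limit of `hₙ = exp(−ξ₀)⋯exp(−ξₙ)`. -/
theorem exp_infinite_product_converges {𝔸 : Type*} [NormedRing 𝔸] [NormedAlgebra ℝ 𝔸]
    [CompleteSpace 𝔸] (ξ : ℕ → 𝔸) (hξ : Summable fun i => ‖ξ i‖) :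
    ∃ g h : 𝔸,
      Tendsto (fun n => ((List.range (n + 1)).reverse.map
          fun i => NormedSpace.exp (ξ i)).prod) atTop (𝓝 g) ∧
      Tendsto (fun n => ((List.range (n + 1)).map
          fun i => NormedSpace.exp (-ξ i)).prod) atTop (𝓝 h) ∧
      g * h = 1 ∧ h * g = 1 := by
  classical
  set f : ℕ → 𝔸 := fun i => NormedSpace.exp (ξ i) with hf
  set f' : ℕ → 𝔸 := fun i => NormedSpace.exp (-ξ i) with hf'
  set G : ℕ → 𝔸 := fun n => ((List.range (n + 1)).reverse.map f).prod with hG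
  set H : ℕ → 𝔸 := fun n => ((List.range (n + 1)).map f').prod with hH
  set t : ℕ → ℝ := fun i => ‖ξ i‖ with ht
  set S : ℝ := ∑' i, t i with hS
  have ht0 : ∀ i, 0 ≤ t i := fun i => norm_nonneg _
  have htS : ∀ i, t i ≤ S := fun i => Summable.le_tsum hξ i (fun j _ => ht0 j)
  have hS0 : 0 ≤ S := tsum_nonneg ht0
  -- recurrences and base values
  have hG0 : G 0 = f 0 := by simp [hG, List.range_succ]
  have hH0 : H 0 = f' 0 := by simp [hH, List.range_succ]
  have hGrec : ∀ n, G (n + 1) = f (n + 1) * G n := by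
    intro n; simp [hG, List.range_succ]
  have hHrec : ∀ n, H (n + 1) = H n * f' (n + 1) := by
    intro n; simp [hH, List.range_succ]
  -- norm of exp(±ξ i) minus one
  have hone : ∀ i, ‖f i - 1‖ ≤ Real.exp (t i) - 1 := fun i => my_norm_exp_sub_one_le (ξ i)
  have hone' : ∀ i, ‖f' i - 1‖ ≤ Real.exp (t i) - 1 := by
    intro i
    have := my_norm_exp_sub_one_le (-ξ i)
    rwa [norm_neg] at this
  -- norm bound on exp
  have hfub : ∀ i, ‖f i‖ ≤ ‖(1 : 𝔸)‖ + Real.exp (t i) - 1 := by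
    intro i
    calc ‖f i‖ = ‖(f i - 1) + 1‖ := by rw [sub_add_cancel]
    _ ≤ ‖f i - 1‖ + ‖(1 : 𝔸)‖ := norm_add_le _ _
    _ ≤ ‖(1 : 𝔸)‖ + Real.exp (t i) - 1 := by have := hone i; linarith
  have hfub' : ∀ i, ‖f' i‖ ≤ ‖(1 : 𝔸)‖ + Real.exp (t i) - 1 := by
    intro i
    calc ‖f' i‖ = ‖(f' i - 1) + 1‖ := by rw [sub_add_cancel]
    _ ≤ ‖f' i - 1‖ + ‖(1 : 𝔸)‖ := norm_add_le _ _
    _ ≤ ‖(1 : 𝔸)‖ + Real.exp (t i) - 1 := by have := hone' i; linarith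
  set C : ℝ := (‖(1 : 𝔸)‖ + 1) * Real.exp S with hC
  have hmul_step : ∀ (a : 𝔸) (i : ℕ), ‖f i * a‖ ≤ Real.exp (t i) * ‖a‖ := by
    intro a i
    calc ‖f i * a‖ = ‖a + (f i - 1) * a‖ := by congr 1; noncomm_ring
    _ ≤ ‖a‖ + ‖(f i - 1) * a‖ := norm_add_le _ _
    _ ≤ ‖a‖ + ‖f i - 1‖ * ‖a‖ := add_le_add_right (norm_mul_le _ _) _
    _ ≤ ‖a‖ + (Real.exp (t i) - 1) * ‖a‖ :=
        add_le_add_right (mul_le_mul_of_nonneg_right (hone i) (norm_nonneg a)) _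
    _ = Real.exp (t i) * ‖a‖ := by ring
  have hmul_step' : ∀ (a : 𝔸) (i : ℕ), ‖a * f' i‖ ≤ Real.exp (t i) * ‖a‖ := by
    intro a i
    calc ‖a * f' i‖ = ‖a + a * (f' i - 1)‖ := by congr 1; noncomm_ring
    _ ≤ ‖a‖ + ‖a * (f' i - 1)‖ := norm_add_le _ _
    _ ≤ ‖a‖ + ‖a‖ * ‖f' i - 1‖ := add_le_add_right (norm_mul_le _ _) _
    _ ≤ ‖a‖ + ‖a‖ * (Real.exp (t i) - 1) :=
        add_le_add_right (mul_le_mul_of_nonneg_left (hone' i) (norm_nonneg a)) _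
    _ = Real.exp (t i) * ‖a‖ := by ring
  have hbase : ∀ i, ‖(1 : 𝔸)‖ + Real.exp (t i) - 1 ≤ (‖(1 : 𝔸)‖ + 1) * Real.exp (t i) := by
    intro i
    have h1 : (1 : ℝ) ≤ Real.exp (t i) := Real.one_le_exp (ht0 i)
    nlinarith [norm_nonneg (1 : 𝔸)]
  have hpartial : ∀ n, (∑ i ∈ Finset.range (n + 1), t i) ≤ S :=
    fun n => Summable.sum_le_tsum _ (fun i _ => ht0 i) hξ
  have hGsum : ∀ n, ‖G n‖ ≤ (‖(1 : 𝔸)‖ + 1) * Real.exp (∑ i ∈ Finset.range (n + 1), t i) := by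
    intro n
    induction n with
    | zero =>
        rw [hG0]
        simpa using (hfub 0).trans (hbase 0)
    | succ n ih =>
        rw [hGrec n]
        calc ‖f (n + 1) * G n‖ ≤ Real.exp (t (n+1)) * ‖G n‖ := hmul_step _ _
        _ ≤ Real.exp (t (n+1)) *
            ((‖(1 : 𝔸)‖ + 1) * Real.exp (∑ i ∈ Finset.range (n + 1), t i)) :=
            mul_le_mul_of_nonneg_left ih (Real.exp_pos _).le
        _ = (‖(1 : 𝔸)‖ + 1) * Real.exp (∑ i ∈ Finset.range (n + 2), t i) := by
            rw [Finset.sum_range_succ _ (n+1), Real.exp_add]; ring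
  have hHsum : ∀ n, ‖H n‖ ≤ (‖(1 : 𝔸)‖ + 1) * Real.exp (∑ i ∈ Finset.range (n + 1), t i) := by
    intro n
    induction n with
    | zero =>
        rw [hH0]
        simpa using (hfub' 0).trans (hbase 0)
    | succ n ih =>
        rw [hHrec n]
        calc ‖H n * f' (n + 1)‖ ≤ Real.exp (t (n+1)) * ‖H n‖ := hmul_step' _ _
        _ ≤ Real.exp (t (n+1)) *
            ((‖(1 : 𝔸)‖ + 1) * Real.exp (∑ i ∈ Finset.range (n + 1), t i)) :=
            mul_le_mul_of_nonneg_left ih (Real.exp_pos _).le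
        _ = (‖(1 : 𝔸)‖ + 1) * Real.exp (∑ i ∈ Finset.range (n + 2), t i) := by
            rw [Finset.sum_range_succ _ (n+1), Real.exp_add]; ring
  have hCbound : ∀ n, (‖(1 : 𝔸)‖ + 1) * Real.exp (∑ i ∈ Finset.range (n + 1), t i) ≤ C := by
    intro n
    exact mul_le_mul_of_nonneg_left (Real.exp_le_exp.2 (hpartial n))
      (by positivity)
  have hGC : ∀ n, ‖G n‖ ≤ C := fun n => (hGsum n).trans (hCbound n)
  have hHC : ∀ n, ‖H n‖ ≤ C := fun n => (hHsum n).trans (hCbound n)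
  have hC0 : 0 ≤ C := le_trans (norm_nonneg _) (hGC 0)
  -- exp u - 1 ≤ u * exp u for u ≥ 0
  have hexp_sub : ∀ u : ℝ, 0 ≤ u → Real.exp u - 1 ≤ u * Real.exp u := by
    intro u hu
    have h := Real.add_one_le_exp (-u)
    rw [Real.exp_neg] at h
    have h3 : (0 : ℝ) < Real.exp u := Real.exp_pos u
    have h4 := mul_le_mul_of_nonneg_right h h3.le
    rw [inv_mul_cancel₀ h3.ne'] at h4
    nlinarith
  -- convergence from summable increments
  set D : ℝ := Real.exp S * C with hD
  have hdiff : ∀ (P : ℕ → 𝔸),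
      (∀ n, ‖P (n+1) - P n‖ ≤ (Real.exp (t (n+1)) - 1) * C) →
      ∃ p : 𝔸, Tendsto P atTop (𝓝 p) := by
    intro P hPd
    have hsum : Summable (fun n => dist (P n) (P (n+1))) := by
      have hb : ∀ n, dist (P n) (P (n+1)) ≤ t (n+1) * D := by
        intro n
        rw [dist_eq_norm, norm_sub_rev]
        refine (hPd n).trans ?_
        have h1 : Real.exp (t (n+1)) - 1 ≤ t (n+1) * Real.exp S := by
          have h2 := hexp_sub (t (n+1)) (ht0 (n+1))
          have h3 : Real.exp (t (n+1)) ≤ Real.exp S := Real.exp_le_exp.2 (htS _)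
          nlinarith [ht0 (n+1)]
        calc (Real.exp (t (n+1)) - 1) * C ≤ (t (n+1) * Real.exp S) * C :=
            mul_le_mul_of_nonneg_right h1 hC0
        _ = t (n+1) * D := by rw [hD]; ring
      refine Summable.of_nonneg_of_le (fun n => dist_nonneg) hb ?_
      exact (((summable_nat_add_iff 1).2 hξ).mul_right D)
    exact cauchySeq_tendsto_of_complete (cauchySeq_of_summable_dist hsum)
  obtain ⟨g, hg⟩ := hdiff G (by
    intro n
    rw [hGrec n]
    calc ‖f (n+1) * G n - G n‖ = ‖(f (n+1) - 1) * G n‖ := by congr 1; noncomm_ring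
    _ ≤ ‖f (n+1) - 1‖ * ‖G n‖ := norm_mul_le _ _
    _ ≤ (Real.exp (t (n+1)) - 1) * C := by
        have h1 : (0:ℝ) ≤ Real.exp (t (n+1)) - 1 := by
          have := Real.one_le_exp (ht0 (n+1)); linarith
        exact mul_le_mul (hone (n+1)) (hGC n) (norm_nonneg _) h1)
  obtain ⟨h, hh⟩ := hdiff H (by
    intro n
    rw [hHrec n]
    calc ‖H n * f' (n+1) - H n‖ = ‖H n * (f' (n+1) - 1)‖ := by congr 1; noncomm_ring
    _ ≤ ‖H n‖ * ‖f' (n+1) - 1‖ := norm_mul_le _ _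
    _ ≤ C * (Real.exp (t (n+1)) - 1) := by
        have h1 : (0:ℝ) ≤ Real.exp (t (n+1)) - 1 := by
          have := Real.one_le_exp (ht0 (n+1)); linarith
        exact mul_le_mul (hHC n) (hone' (n+1)) (norm_nonneg _) hC0
    _ = (Real.exp (t (n+1)) - 1) * C := mul_comm _ _)
  refine ⟨g, h, hg, hh, ?_, ?_⟩
  · have hGH : ∀ n, G n * H n = 1 := by
      intro n
      induction n with
      | zero =>
          rw [hG0, hH0]
          exact my_exp_mul_exp_neg (ξ 0)
      | succ n ih =>
          rw [hGrec n, hHrec n]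
          calc f (n+1) * G n * (H n * f' (n+1))
              = f (n+1) * (G n * H n) * f' (n+1) := by noncomm_ring
          _ = f (n+1) * f' (n+1) := by rw [ih, mul_one]
          _ = 1 := my_exp_mul_exp_neg (ξ (n+1))
    have h2 : Tendsto (fun n => G n * H n) atTop (𝓝 (g * h)) := hg.mul hh
    have h1 : Tendsto (fun n => G n * H n) atTop (𝓝 (1 : 𝔸)) := by
      simp only [hGH]; exact tendsto_const_nhds
    exact tendsto_nhds_unique h2 h1
  · have hHG : ∀ n, H n * G n = 1 := by
      intro n
      induction n with
      | zero =>
          rw [hG0, hH0]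
          have := my_exp_mul_exp_neg (-ξ 0)
          rwa [neg_neg] at this
      | succ n ih =>
          rw [hGrec n, hHrec n]
          have hstep : f' (n+1) * f (n+1) = 1 := by
            have := my_exp_mul_exp_neg (-ξ (n+1))
            rwa [neg_neg] at this
          calc H n * f' (n+1) * (f (n+1) * G n)
              = H n * (f' (n+1) * f (n+1)) * G n := by noncomm_ring
          _ = H n * G n := by rw [hstep, mul_one]
          _ = 1 := ih
    have h2 : Tendsto (fun n => H n * G n) atTop (𝓝 (h * g)) := hh.mul hg
    have h1 : Tendsto (fun n => H n * G n) atTop (𝓝 (1 : 𝔸)) := by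
      simp only [hHG]; exact tendsto_const_nhds
    exact tendsto_nhds_unique h2 h1
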